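/- arXiv:2511.07646 — 2 statements merged into one kernel-verified Lean document; each statement's English description precedes it below -/
import Mathlib

section
/- Under the normalized gradient update Ξ_{k+1} = Ξ_k − γ (Ξ_k η_k η_kᵀ)/N_k with N_k = max{φ, ‖η_k‖²}, φ > 0, and 0 < γ < 2, the sum Σ_{k=0}^∞ ‖Ξ_k η_k‖²/N_k is finite and bounded by ‖Ξ_0‖_F² / (γ(2−γ)). -/
open Matrix

/-- Squared Frobenius norm. -/
def frobSq {p q : ℕ} (M : Matrix (Fin p) (Fin q) ℝ) : ℝ := ∑ i, ∑ j, (M i j) ^ 2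

theorem stmt_12 (p q : ℕ)
    (Ξ : ℕ → Matrix (Fin p) (Fin q) ℝ) (η : ℕ → (Fin q → ℝ)) (Nk : ℕ → ℝ)
    (φ γ : ℝ) (hφ : 0 < φ) (hγ₀ : 0 < γ) (hγ₂ : γ < 2)
    (hN : ∀ k, Nk k = max φ (η k ⬝ᵥ η k))
    (hupd : ∀ k, Ξ (k + 1) = Ξ k - (γ / Nk k) • Matrix.vecMulVec (Ξ k *ᵥ η k) (η k)) :
    Summable (fun k => ((Ξ k *ᵥ η k) ⬝ᵥ (Ξ k *ᵥ η k)) / Nk k) ∧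
    (∑' k, ((Ξ k *ᵥ η k) ⬝ᵥ (Ξ k *ᵥ η k)) / Nk k) ≤ frobSq (Ξ 0) / (γ * (2 - γ)) := by
  set a : ℕ → ℝ := fun k => ((Ξ k *ᵥ η k) ⬝ᵥ (Ξ k *ᵥ η k)) / Nk k with ha
  have hNpos : ∀ k, 0 < Nk k := fun k => by
    rw [hN k]; exact lt_of_lt_of_le hφ (le_max_left _ _)
  have hEnn : ∀ k, 0 ≤ (Ξ k *ᵥ η k) ⬝ᵥ (Ξ k *ᵥ η k) := fun k => by
    simp only [dotProduct]
    exact Finset.sum_nonneg fun i _ => mul_self_nonneg _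
  have hVnn : ∀ k, 0 ≤ frobSq (Ξ k) := fun k =>
    Finset.sum_nonneg fun i _ => Finset.sum_nonneg fun j _ => sq_nonneg _
  have hann : ∀ k, 0 ≤ a k := fun k => div_nonneg (hEnn k) (hNpos k).le
  have hcc : 0 < γ * (2 - γ) := mul_pos hγ₀ (by linarith)
  -- key decrement inequality
  have hkey : ∀ k, γ * (2 - γ) * a k ≤ frobSq (Ξ k) - frobSq (Ξ (k + 1)) := by
    intro k
    set c : ℝ := γ / Nk k with hc
    set E : ℝ := (Ξ k *ᵥ η k) ⬝ᵥ (Ξ k *ᵥ η k) with hE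
    set H : ℝ := η k ⬝ᵥ η k with hH
    have hEeq : E = ∑ i, (Ξ k *ᵥ η k) i ^ 2 := by
      simp [hE, dotProduct, sq]
    have hexp : frobSq (Ξ (k + 1)) = frobSq (Ξ k) - 2 * c * E + c ^ 2 * E * H := by
      rw [hupd k]
      unfold frobSq
      have : ∀ i : Fin p,
          ∑ j, ((Ξ k - c • Matrix.vecMulVec (Ξ k *ᵥ η k) (η k)) i j) ^ 2
            = (∑ j, (Ξ k i j) ^ 2) - 2 * c * ((Ξ k *ᵥ η k) i) ^ 2
              + c ^ 2 * H * ((Ξ k *ᵥ η k) i) ^ 2 := by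
        intro i
        have hmv : (Ξ k *ᵥ η k) i = ∑ j, Ξ k i j * η k j := by
          simp [Matrix.mulVec, dotProduct]
        simp only [Matrix.sub_apply, Matrix.smul_apply, Matrix.vecMulVec_apply,
          smul_eq_mul]
        have : ∀ j : Fin q,
            (Ξ k i j - c * ((Ξ k *ᵥ η k) i * η k j)) ^ 2
              = (Ξ k i j) ^ 2 - 2 * c * ((Ξ k *ᵥ η k) i) * (Ξ k i j * η k j)
                + c ^ 2 * ((Ξ k *ᵥ η k) i) ^ 2 * (η k j) ^ 2 := by
          intro j; ring
        rw [Finset.sum_congr rfl fun j _ => this j]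
        rw [Finset.sum_add_distrib, Finset.sum_sub_distrib,
          ← Finset.mul_sum, ← Finset.mul_sum, ← hmv]
        have hHeq : H = ∑ j, (η k j) ^ 2 := by simp [hH, dotProduct, sq]
        rw [hHeq]; ring
      rw [Finset.sum_congr rfl fun i _ => this i]
      rw [Finset.sum_add_distrib, Finset.sum_sub_distrib,
        ← Finset.mul_sum, ← Finset.mul_sum, ← hEeq]
      ring
    have hHN : H ≤ Nk k := by rw [hN k]; exact le_max_right _ _
    have hNpos' := hNpos k
    have hcN : c * Nk k = γ := by rw [hc]; exact div_mul_cancel₀ γ hNpos'.ne'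
    have h1 : c ^ 2 * E * H ≤ c ^ 2 * E * Nk k := by
      apply mul_le_mul_of_nonneg_left hHN
      exact mul_nonneg (sq_nonneg _) (hEnn k)
    have haE : a k = E / Nk k := rfl
    rw [hexp]
    have heq : 2 * c * E - c ^ 2 * E * Nk k = γ * (2 - γ) * (E / Nk k) := by
      rw [hc]; field_simp
    have : γ * (2 - γ) * a k = 2 * c * E - c ^ 2 * E * Nk k := by
      rw [heq, haE]
    linarith [this, h1]
  -- telescoping bound on partial sums
  have hsum : ∀ n, ∑ k ∈ Finset.range n, a k ≤ frobSq (Ξ 0) / (γ * (2 - γ)) := by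
    intro n
    have htel : ∑ k ∈ Finset.range n, (γ * (2 - γ) * a k) ≤ frobSq (Ξ 0) := by
      calc ∑ k ∈ Finset.range n, (γ * (2 - γ) * a k)
          ≤ ∑ k ∈ Finset.range n, (frobSq (Ξ k) - frobSq (Ξ (k + 1))) :=
            Finset.sum_le_sum fun k _ => hkey k
        _ = frobSq (Ξ 0) - frobSq (Ξ n) := Finset.sum_range_sub' _ n
        _ ≤ frobSq (Ξ 0) := by linarith [hVnn n]
    rw [← Finset.mul_sum] at htel
    rw [le_div_iff₀ hcc, mul_comm]
    exact htel
  have hS : Summable a := summable_of_sum_range_le hann hsum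
  exact ⟨hS, Summable.tsum_le_of_sum_range_le hS hsum⟩
end

section
/- If additionally the regressors are uniformly bounded, sup_k ‖η_k‖ ≤ B < ∞, then under the normalized update with 0 < γ < 2 and φ > 0, the prediction error ε_{k+1} = Ξ_k η_k converges to zero: lim_{k→∞} ‖Ξ_k η_k‖ = 0. -/
open Matrix Filter

theorem stmt_13 (p q : ℕ)
    (Ξ : ℕ → Matrix (Fin p) (Fin q) ℝ) (η : ℕ → (Fin q → ℝ)) (Nk : ℕ → ℝ)
    (φ γ B : ℝ) (hφ : 0 < φ) (hγ₀ : 0 < γ) (hγ₂ : γ < 2)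
    (hN : ∀ k, Nk k = max φ (η k ⬝ᵥ η k))
    (hupd : ∀ k, Ξ (k + 1) = Ξ k - (γ / Nk k) • Matrix.vecMulVec (Ξ k *ᵥ η k) (η k))
    (hB : ∀ k, Real.sqrt (η k ⬝ᵥ η k) ≤ B) :
    Tendsto (fun k => Real.sqrt ((Ξ k *ᵥ η k) ⬝ᵥ (Ξ k *ᵥ η k))) atTop (nhds 0) := by
  set e : ℕ → ℝ := fun k => (Ξ k *ᵥ η k) ⬝ᵥ (Ξ k *ᵥ η k) with he
  set V : ℕ → ℝ := fun k => ∑ i, ∑ j, (Ξ k i j) ^ 2 with hV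
  have hepos : ∀ k, 0 ≤ e k := fun k =>
    Finset.sum_nonneg fun i _ => mul_self_nonneg _
  have hηnn : ∀ k, 0 ≤ η k ⬝ᵥ η k := fun k =>
    Finset.sum_nonneg fun i _ => mul_self_nonneg _
  have hVnn : ∀ k, 0 ≤ V k := fun k =>
    Finset.sum_nonneg fun i _ => Finset.sum_nonneg fun j _ => sq_nonneg _
  have hNφ : ∀ k, φ ≤ Nk k := fun k => (hN k) ▸ le_max_left _ _
  have hNpos : ∀ k, 0 < Nk k := fun k => lt_of_lt_of_le hφ (hNφ k)
  have hNh : ∀ k, η k ⬝ᵥ η k ≤ Nk k := fun k => (hN k) ▸ le_max_right _ _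
  have hBnn : 0 ≤ B := le_trans (Real.sqrt_nonneg _) (hB 0)
  set M : ℝ := max φ (B * B) with hM
  have hMpos : 0 < M := lt_of_lt_of_le hφ (le_max_left _ _)
  have hNM : ∀ k, Nk k ≤ M := by
    intro k
    rw [hN k, hM]
    apply max_le_max le_rfl
    have := mul_self_le_mul_self (Real.sqrt_nonneg _) (hB k)
    rwa [Real.mul_self_sqrt (hηnn k)] at this
  -- key identity for V
  have key : ∀ k, V (k + 1) =
      V k - 2 * (γ / Nk k) * e k + (γ / Nk k) ^ 2 * e k * (η k ⬝ᵥ η k) := by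
    intro k
    set c : ℝ := γ / Nk k
    have hx : ∀ i j, Ξ (k + 1) i j
        = Ξ k i j - c * ((Ξ k *ᵥ η k) i * η k j) := by
      intro i j
      rw [hupd k]
      simp [Matrix.vecMulVec, Matrix.sub_apply, Matrix.smul_apply, mul_assoc, c]
    have hinner : ∀ i, ∑ j, (Ξ (k + 1) i j) ^ 2 =
        (∑ j, (Ξ k i j) ^ 2) - 2 * c * ((Ξ k *ᵥ η k) i * (Ξ k *ᵥ η k) i)
          + c ^ 2 * ((Ξ k *ᵥ η k) i * (Ξ k *ᵥ η k) i) * (η k ⬝ᵥ η k) := by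
      intro i
      have hstep : ∀ j, (Ξ (k + 1) i j) ^ 2 =
          (Ξ k i j) ^ 2 - 2 * c * ((Ξ k *ᵥ η k) i) * (Ξ k i j * η k j)
            + c ^ 2 * ((Ξ k *ᵥ η k) i * (Ξ k *ᵥ η k) i) * (η k j * η k j) := by
        intro j; rw [hx i j]; ring
      have hmv : ∑ j, Ξ k i j * η k j = (Ξ k *ᵥ η k) i := by
        simp [Matrix.mulVec, dotProduct]
      simp only [hstep, Finset.sum_add_distrib, Finset.sum_sub_distrib,
        ← Finset.mul_sum, hmv]
      simp only [dotProduct]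
      ring
    have hVexp : V (k + 1) = ∑ i, ((∑ j, (Ξ k i j) ^ 2)
        - 2 * c * ((Ξ k *ᵥ η k) i * (Ξ k *ᵥ η k) i)
        + c ^ 2 * ((Ξ k *ᵥ η k) i * (Ξ k *ᵥ η k) i) * (η k ⬝ᵥ η k)) := by
      rw [hV]
      exact Finset.sum_congr rfl fun i _ => hinner i
    rw [hVexp]
    simp only [Finset.sum_add_distrib, Finset.sum_sub_distrib, ← Finset.mul_sum,
      ← Finset.sum_mul]
    simp only [hV, he, dotProduct]
  -- decrease bound
  set d : ℝ := γ * (2 - γ) / M with hd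
  have hdpos : 0 < d := div_pos (mul_pos hγ₀ (by linarith)) hMpos
  have hdec : ∀ k, d * e k ≤ V k - V (k + 1) := by
    intro k
    rw [key k]
    have hc : γ / Nk k ≥ γ / M := by
      apply div_le_div_of_nonneg_left (le_of_lt hγ₀) (hNpos k) (hNM k)
    have hch : (γ / Nk k) * (η k ⬝ᵥ η k) ≤ γ := by
      rw [div_mul_eq_mul_div, div_le_iff₀ (hNpos k)]
      have := mul_le_mul_of_nonneg_left (hNh k) (le_of_lt hγ₀)
      linarith
    have hfac : d ≤ (γ / Nk k) * (2 - (γ / Nk k) * (η k ⬝ᵥ η k)) := by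
      have h1 : γ / M ≤ γ / Nk k := hc
      have h2 : (2 - γ) ≤ 2 - (γ / Nk k) * (η k ⬝ᵥ η k) := by linarith
      have h3 : 0 ≤ γ / M := div_nonneg (le_of_lt hγ₀) (le_of_lt hMpos)
      have h4 : 0 ≤ 2 - γ := by linarith
      calc d = (γ / M) * (2 - γ) := by rw [hd]; ring
        _ ≤ (γ / Nk k) * (2 - (γ / Nk k) * (η k ⬝ᵥ η k)) :=
          mul_le_mul h1 h2 h4 (le_trans h3 h1)
    have := mul_le_mul_of_nonneg_right hfac (hepos k)
    nlinarith [hepos k]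
  -- summability
  have hsum : Summable (fun k => d * e k) := by
    apply summable_of_sum_range_le (fun k => mul_nonneg (le_of_lt hdpos) (hepos k))
    intro n
    calc ∑ k ∈ Finset.range n, d * e k
        ≤ ∑ k ∈ Finset.range n, (V k - V (k + 1)) :=
          Finset.sum_le_sum fun k _ => hdec k
      _ = V 0 - V n := Finset.sum_range_sub' V n
      _ ≤ V 0 := by linarith [hVnn n]
  have ht : Tendsto (fun k => d * e k) atTop (nhds 0) := hsum.tendsto_atTop_zero
  have hte : Tendsto e atTop (nhds 0) := by
    have := ht.const_mul (1 / d)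
    simp only [mul_zero] at this
    convert this using 2 with k
    field_simp
  have := hte.sqrt
  simpa [Real.sqrt_zero] using this
end
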